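/- (Johnson–Neugebauer) For a weight $w$ and $1 < p, s < \infty$: $w \in A_p \cap RH_s$ if and only if $w^s \in A_\tau$ where $\tau = s(p-1)+1$. -/

import Mathlib

open MeasureTheory Metric ENNReal

noncomputable section

abbrev Rn (n : ℕ) := EuclideanSpace ℝ (Fin n)

variable {n : ℕ}

/-- The variable Lebesgue (quasi-)norm of an `ℝ≥0∞`-valued function `f` with
exponent function `p` (values in `(0,∞]`), following the definition
`‖f‖ = inf { λ > 0 : ∫_{p≠∞} (f/λ)^{p(x)} dx + ‖f/λ‖_{L^∞({p=∞})} ≤ 1 }`. -/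
def vnorm (p : Rn n → ℝ≥0∞) (f : Rn n → ℝ≥0∞) : ℝ≥0∞ :=
  sInf {l : ℝ≥0∞ | 0 < l ∧
    (∫⁻ x in {x | p x ≠ ∞}, (f x / l) ^ (p x).toReal) +
      essSup (fun x => f x / l) (volume.restrict {x | p x = ∞}) ≤ 1}

/-- The pointwise conjugate exponent: `1/a + 1/a' = 1`, with `1' = ∞`, `∞' = 1`. -/
def econj (a : ℝ≥0∞) : ℝ≥0∞ := (1 - a⁻¹)⁻¹

/-- Variable exponent Muckenhoupt constant
`[w]_{A_{p(·)}} = sup_B |B|⁻¹ ‖w χ_B‖_{p(·)} ‖w⁻¹ χ_B‖_{p'(·)}`. -/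
def ApVarConst (p : Rn n → ℝ≥0∞) (w : Rn n → ℝ≥0∞) : ℝ≥0∞ :=
  ⨆ (c : Rn n) (r : ℝ) (_ : 0 < r),
    (volume (ball c r))⁻¹ * vnorm p ((ball c r).indicator w) *
      vnorm (fun x => econj (p x)) ((ball c r).indicator fun y => (w y)⁻¹)

/-- Classical Muckenhoupt `A_p` constant for `1 < p < ∞`:
`sup_B (|B|⁻¹∫_B w)(|B|⁻¹∫_B w^{1-p'})^{p-1}` with `p' = p/(p-1)`. -/
def ApConst (p : ℝ) (w : Rn n → ℝ≥0∞) : ℝ≥0∞ :=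
  ⨆ (c : Rn n) (r : ℝ) (_ : 0 < r),
    ((volume (ball c r))⁻¹ * ∫⁻ y in ball c r, w y) *
      (((volume (ball c r))⁻¹ * ∫⁻ y in ball c r, (w y) ^ (1 - p / (p - 1))) ^ (p - 1))

/-- The `A_1` constant `sup_B (|B|⁻¹∫_B w)/essinf_B w`. -/
def A1Const (w : Rn n → ℝ≥0∞) : ℝ≥0∞ :=
  ⨆ (c : Rn n) (r : ℝ) (_ : 0 < r),
    ((volume (ball c r))⁻¹ * ∫⁻ y in ball c r, w y) /
      essInf w (volume.restrict (ball c r))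

/-- `w ∈ A_p` for `1 ≤ p < ∞` (with the `A_1` condition when `p = 1`). -/
def IsAp (p : ℝ) (w : Rn n → ℝ≥0∞) : Prop :=
  if p = 1 then A1Const w < ∞ else ApConst p w < ∞

/-- `A_∞ = ⋃_{t>1} A_t`. -/
def IsAinf (w : Rn n → ℝ≥0∞) : Prop := ∃ t : ℝ, 1 < t ∧ ApConst t w < ∞

/-- The reverse Hölder constant `[w]_{RH_s} = sup_B (|B|⁻¹∫_B w^s)^{1/s}/(|B|⁻¹∫_B w)`. -/
def RHConst (s : ℝ) (w : Rn n → ℝ≥0∞) : ℝ≥0∞ :=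
  ⨆ (c : Rn n) (r : ℝ) (_ : 0 < r),
    (((volume (ball c r))⁻¹ * ∫⁻ y in ball c r, (w y) ^ s) ^ (1 / s)) /
      ((volume (ball c r))⁻¹ * ∫⁻ y in ball c r, w y)

/-- The `A_{p,q}` constant for `1 < p ≤ q < ∞`:
`sup_B (|B|⁻¹∫_B w^q)^{1/q} (|B|⁻¹∫_B w^{-p'})^{1/p'}`. -/
def ApqConst (p q : ℝ) (w : Rn n → ℝ≥0∞) : ℝ≥0∞ :=
  ⨆ (c : Rn n) (r : ℝ) (_ : 0 < r),
    (((volume (ball c r))⁻¹ * ∫⁻ y in ball c r, (w y) ^ q) ^ (1 / q)) *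
      (((volume (ball c r))⁻¹ * ∫⁻ y in ball c r, (w y) ^ (-(p / (p - 1)))) ^ (1 - 1 / p))

/-- `w ∈ A_{p,q}` for `1 ≤ p ≤ q`, with the `A_{1,q}` condition when `p = 1`. -/
def IsApq (p q : ℝ) (w : Rn n → ℝ≥0∞) : Prop :=
  if p = 1 then A1Const (fun x => (w x) ^ q) < ∞ else ApqConst p q w < ∞

/-- The variable exponent `A_{p(·),q(·)}` constant (with parameter `γ = 1/p - 1/q`):
`sup_B |B|^{γ-1} ‖w χ_B‖_{q(·)} ‖w⁻¹ χ_B‖_{p'(·)}`. -/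
def ApqVarConst (γ : ℝ) (p q : Rn n → ℝ≥0∞) (w : Rn n → ℝ≥0∞) : ℝ≥0∞ :=
  ⨆ (c : Rn n) (r : ℝ) (_ : 0 < r),
    (volume (ball c r)) ^ (γ - 1) * vnorm q ((ball c r).indicator w) *
      vnorm (fun x => econj (p x)) ((ball c r).indicator fun y => (w y)⁻¹)

/-- The Hardy–Littlewood maximal operator (over balls containing `x`). -/
def Mop (f : Rn n → ℝ≥0∞) (x : Rn n) : ℝ≥0∞ :=
  ⨆ (c : Rn n) (r : ℝ) (_ : 0 < r) (_ : x ∈ ball c r),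
    (volume (ball c r))⁻¹ * ∫⁻ y in ball c r, f y

/-- `M` is bounded on the weighted variable Lebesgue space `L^{p(·)}(w)`. -/
def MBddOn (p : Rn n → ℝ≥0∞) (w : Rn n → ℝ≥0∞) : Prop :=
  ∃ C : ℝ≥0∞, C < ∞ ∧ ∀ f : Rn n → ℝ≥0∞, Measurable f →
    vnorm p (fun x => Mop f x * w x) ≤ C * vnorm p (fun x => f x * w x)

/-- The Rubio de Francia iteration `R h = ∑_k M^k h / (2^k N^k)` where `N` bounds
the operator norm of `M`. -/
def RdF (N : ℝ≥0∞) (h : Rn n → ℝ≥0∞) (x : Rn n) : ℝ≥0∞ :=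
  ∑' k : ℕ, (Mop^[k] h) x / (2 ^ k * N ^ k)


namespace JN

variable {n : ℕ}

lemma volpos (c : Rn n) {r : ℝ} (hr : 0 < r) : 0 < volume (ball c r) :=
  measure_ball_pos _ _ hr

lemma volne_top (c : Rn n) (r : ℝ) : volume (ball c r) ≠ ∞ :=
  measure_ball_lt_top.ne

lemma lint_pos {f : Rn n → ℝ≥0∞} (hfm : Measurable f)
    (hf : ∀ᵐ x ∂(volume : Measure (Rn n)), f x ≠ 0) (c : Rn n) {r : ℝ} (hr : 0 < r) :
    0 < ∫⁻ y in ball c r, f y := by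
  rw [pos_iff_ne_zero]
  intro h0
  rw [lintegral_eq_zero_iff hfm] at h0
  have hres : (volume.restrict (ball c r)) ≠ 0 := by
    intro h
    have h2 : volume (ball c r) = 0 := by
      rw [← Measure.restrict_apply_univ (ball c r), h]; simp
    exact (volpos c hr).ne' h2
  haveI : (ae (volume.restrict (ball c r))).NeBot := ae_neBot.mpr hres
  obtain ⟨x, hx0, hxne⟩ := (h0.and (ae_restrict_of_ae hf)).exists
  exact hxne hx0

lemma avg_pos {f : Rn n → ℝ≥0∞} (hfm : Measurable f)
    (hf : ∀ᵐ x ∂(volume : Measure (Rn n)), f x ≠ 0) (c : Rn n) {r : ℝ} (hr : 0 < r) :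
    0 < (volume (ball c r))⁻¹ * ∫⁻ y in ball c r, f y :=
  ENNReal.mul_pos (ENNReal.inv_ne_zero.mpr (volne_top c r)) (lint_pos hfm hf c hr).ne'

lemma holder_avg (c : Rn n) {r : ℝ} (hr : 0 < r) {a b : ℝ} (hab : a.HolderConjugate b)
    {f g : Rn n → ℝ≥0∞} (hf : Measurable f) (hg : Measurable g) :
    (volume (ball c r))⁻¹ * ∫⁻ y in ball c r, f y * g y ≤
      ((volume (ball c r))⁻¹ * ∫⁻ y in ball c r, f y ^ a) ^ (1 / a) *
      ((volume (ball c r))⁻¹ * ∫⁻ y in ball c r, g y ^ b) ^ (1 / b) := by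
  have hV : volume (ball c r) ≠ ∞ := volne_top c r
  have hV0 : volume (ball c r) ≠ 0 := (volpos c hr).ne'
  set μ : Measure (Rn n) := (volume (ball c r))⁻¹ • volume.restrict (ball c r) with hμ
  have key := ENNReal.lintegral_mul_le_Lp_mul_Lq μ hab hf.aemeasurable hg.aemeasurable
  simp only [hμ, lintegral_smul_measure, Pi.mul_apply] at key
  calc (volume (ball c r))⁻¹ * ∫⁻ y in ball c r, f y * g y ≤
      ((volume (ball c r))⁻¹ * ∫⁻ y in ball c r, f y ^ a) ^ (1 / a) *
        (((volume (ball c r))⁻¹ * ∫⁻ y in ball c r, g y ^ b) ^ (1 / b)) := key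
    _ = _ := rfl

lemma round_trip {x : ℝ≥0∞} {a : ℝ} (ha : a ≠ 0) : (x ^ a) ^ a⁻¹ = x := by
  rw [← ENNReal.rpow_mul, mul_inv_cancel₀ ha, ENNReal.rpow_one]

lemma jensen (w : Rn n → ℝ≥0∞) (hwm : Measurable w) {s : ℝ} (hs : 1 < s)
    (c : Rn n) {r : ℝ} (hr : 0 < r) :
    ((volume (ball c r))⁻¹ * ∫⁻ y in ball c r, w y) ^ s ≤
      (volume (ball c r))⁻¹ * ∫⁻ y in ball c r, (w y) ^ s := by
  have hab := Real.HolderConjugate.conjExponent hs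
  have h := holder_avg c hr hab hwm (g := fun _ => (1 : ℝ≥0∞)) measurable_const
  simp only [mul_one, ENNReal.one_rpow] at h
  rw [setLIntegral_one, ENNReal.inv_mul_cancel (volpos c hr).ne' (volne_top c r),
    ENNReal.one_rpow, mul_one] at h
  have hs0 : (0:ℝ) ≤ s := le_of_lt (lt_trans one_pos hs)
  calc ((volume (ball c r))⁻¹ * ∫⁻ y in ball c r, w y) ^ s ≤
      (((volume (ball c r))⁻¹ * ∫⁻ y in ball c r, (w y) ^ s) ^ (1 / s)) ^ s :=
        ENNReal.rpow_le_rpow h hs0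
    _ = _ := by
        rw [← ENNReal.rpow_mul, one_div, inv_mul_cancel₀ (by positivity : s ≠ 0),
          ENNReal.rpow_one]

lemma holder_one (w : Rn n → ℝ≥0∞) (hwm : Measurable w)
    (hw : ∀ᵐ x ∂(volume : Measure (Rn n)), 0 < w x ∧ w x < ∞)
    {p : ℝ} (hp : 1 < p) (c : Rn n) {r : ℝ} (hr : 0 < r) :
    (1 : ℝ≥0∞) ≤ ((volume (ball c r))⁻¹ * ∫⁻ y in ball c r, w y) *
      (((volume (ball c r))⁻¹ * ∫⁻ y in ball c r, (w y) ^ (1 - p / (p - 1))) ^ (p - 1)) := by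
  have hp0 : (0:ℝ) < p := lt_trans one_pos hp
  have hp1 : p - 1 ≠ 0 := ne_of_gt (sub_pos.mpr hp)
  have hab := Real.HolderConjugate.conjExponent hp
  have h := holder_avg c hr hab (f := fun y => (w y) ^ (1/p)) (g := fun y => (w y) ^ (-(1/p)))
    (hwm.pow_const _) (hwm.pow_const _)
  -- the left integrand is a.e. 1
  have hL : ∫⁻ y in ball c r, ((w y) ^ (1/p)) * ((w y) ^ (-(1/p))) =
      ∫⁻ y in ball c r, (1:ℝ≥0∞) := by
    refine lintegral_congr_ae (ae_restrict_of_ae ?_)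
    filter_upwards [hw] with x hx
    rw [← ENNReal.rpow_add _ _ hx.1.ne' hx.2.ne, add_neg_cancel, ENNReal.rpow_zero]
  have hfp : ∀ y : Rn n, ((w y) ^ (1/p)) ^ p = w y := fun y => by
    rw [← ENNReal.rpow_mul, one_div, inv_mul_cancel₀ hp0.ne', ENNReal.rpow_one]
  have hgq : ∀ y : Rn n, ((w y) ^ (-(1/p))) ^ (p.conjExponent) = (w y) ^ (1 - p / (p - 1)) :=
    fun y => by
      rw [← ENNReal.rpow_mul]
      congr 1
      rw [Real.conjExponent]
      field_simp
      ring
  simp only [hfp, hgq, hL] at h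
  have h1 : (volume (ball c r))⁻¹ * ∫⁻ y in ball c r, (1:ℝ≥0∞) = 1 := by
    rw [setLIntegral_one]
    exact ENNReal.inv_mul_cancel (volpos c hr).ne' (volne_top c r)
  rw [h1] at h
  have hconj : 1 / p.conjExponent = (p - 1) / p := by
    rw [Real.conjExponent]; field_simp
  rw [hconj] at h
  calc (1:ℝ≥0∞) = 1 ^ p := (ENNReal.one_rpow p).symm
    _ ≤ ((((volume (ball c r))⁻¹ * ∫⁻ y in ball c r, w y) ^ (1/p)) *
          (((volume (ball c r))⁻¹ * ∫⁻ y in ball c r, (w y) ^ (1 - p / (p - 1))) ^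
            ((p-1)/p))) ^ p := ENNReal.rpow_le_rpow h hp0.le
    _ = _ := by
        rw [ENNReal.mul_rpow_of_nonneg _ _ hp0.le, ← ENNReal.rpow_mul, ← ENNReal.rpow_mul,
          one_div, inv_mul_cancel₀ hp0.ne', ENNReal.rpow_one, div_mul_cancel₀ _ hp0.ne']

lemma rpow_ne_zero {x : ℝ≥0∞} {t : ℝ} (hx : x ≠ 0) (ht : 0 < t) : x ^ t ≠ 0 := by
  intro h
  rcases ENNReal.rpow_eq_zero_iff.mp h with ⟨h1, _⟩ | ⟨_, h2⟩
  · exact hx h1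
  · exact absurd h2 (not_lt.mpr ht.le)

lemma le_sup3 {f : Rn n → ℝ → ℝ≥0∞} (c : Rn n) {r : ℝ} (hr : 0 < r) :
    f c r ≤ ⨆ (c : Rn n) (r : ℝ) (_ : 0 < r), f c r :=
  le_iSup_of_le c (le_iSup_of_le r (le_iSup_of_le hr le_rfl))

end JN

open JN

/-- (Johnson–Neugebauer) `w ∈ A_p ∩ RH_s` iff `w^s ∈ A_τ` with `τ = s(p-1)+1`. -/
theorem johnson_neugebauer {n : ℕ} (p s : ℝ) (hp : 1 < p) (hs : 1 < s)
    (w : Rn n → ℝ≥0∞) (hwm : Measurable w)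
    (hw : ∀ᵐ x ∂(volume : Measure (Rn n)), 0 < w x ∧ w x < ∞) :
    (ApConst p w < ∞ ∧ RHConst s w < ∞) ↔
      ApConst (s * (p - 1) + 1) (fun x => (w x) ^ s) < ∞ := by
  have hp0 : (0:ℝ) < p := lt_trans one_pos hp
  have hs0 : (0:ℝ) < s := lt_trans one_pos hs
  have hp1 : (0:ℝ) < p - 1 := sub_pos.mpr hp
  have hp1' : p - 1 ≠ 0 := hp1.ne'
  have hs' : s ≠ 0 := hs0.ne'
  have hsp1 : (0:ℝ) < s * (p - 1) := mul_pos hs0 hp1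
  have hsp' : s * (p - 1) ≠ 0 := hsp1.ne'
  have hτ1 : s * (p - 1) + 1 - 1 = s * (p - 1) := by ring
  -- a.e. nonvanishing facts
  have hwne : ∀ᵐ x ∂(volume : Measure (Rn n)), w x ≠ 0 := hw.mono fun x hx => hx.1.ne'
  have hwsne : ∀ᵐ x ∂(volume : Measure (Rn n)), (w x) ^ s ≠ 0 :=
    hw.mono fun x hx => rpow_ne_zero hx.1.ne' hs0
  have hwene : ∀ᵐ x ∂(volume : Measure (Rn n)), (w x) ^ (1 - p / (p - 1)) ≠ 0 := by
    refine hw.mono fun x hx h => ?_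
    rcases ENNReal.rpow_eq_zero_iff.mp h with ⟨h1, _⟩ | ⟨h1, _⟩
    · exact hx.1.ne' h1
    · exact hx.2.ne h1
  -- pointwise exponent identity
  have hpt : ∀ y : Rn n,
      ((w y) ^ s) ^ (1 - (s * (p - 1) + 1) / (s * (p - 1))) = (w y) ^ (1 - p / (p - 1)) := by
    intro y
    rw [← ENNReal.rpow_mul]
    congr 1
    field_simp
    ring
  -- rewrite of the target constant
  have hAeq : ApConst (s * (p - 1) + 1) (fun x => (w x) ^ s) =
      ⨆ (c : Rn n) (r : ℝ) (_ : 0 < r),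
        ((volume (ball c r))⁻¹ * ∫⁻ y in ball c r, (w y) ^ s) *
          (((volume (ball c r))⁻¹ * ∫⁻ y in ball c r, (w y) ^ (1 - p / (p - 1))) ^
            (s * (p - 1))) := by
    rw [ApConst]
    refine iSup_congr fun c => iSup_congr fun r => iSup_congr fun hr => ?_
    rw [hτ1]
    simp only [hpt]
  -- per-ball extraction lemmas
  have hAple : ∀ (c : Rn n) (r : ℝ), 0 < r →
      ((volume (ball c r))⁻¹ * ∫⁻ y in ball c r, w y) *
        (((volume (ball c r))⁻¹ * ∫⁻ y in ball c r, (w y) ^ (1 - p / (p - 1))) ^ (p - 1)) ≤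
        ApConst p w := by
    intro c r hr; rw [ApConst]; exact le_sup3 c hr
  have hRHle : ∀ (c : Rn n) (r : ℝ), 0 < r →
      (((volume (ball c r))⁻¹ * ∫⁻ y in ball c r, (w y) ^ s) ^ (1 / s)) /
        ((volume (ball c r))⁻¹ * ∫⁻ y in ball c r, w y) ≤ RHConst s w := by
    intro c r hr; rw [RHConst]; exact le_sup3 c hr
  constructor
  · rintro ⟨hA, hR⟩
    rw [hAeq]
    refine lt_of_le_of_lt (iSup_le fun c => iSup_le fun r => iSup_le fun hr => ?_)
      (ENNReal.rpow_lt_top_of_nonneg hs0.le (ENNReal.mul_lt_top hR hA).ne)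
    set A := (volume (ball c r))⁻¹ * ∫⁻ y in ball c r, w y with hAdef
    set N := (volume (ball c r))⁻¹ * ∫⁻ y in ball c r, (w y) ^ (1 - p / (p - 1)) with hNdef
    set S := (volume (ball c r))⁻¹ * ∫⁻ y in ball c r, (w y) ^ s with hSdef
    have hApos : 0 < A := avg_pos hwm hwne c hr
    have hNpos : 0 < N := avg_pos (hwm.pow_const _) hwene c hr
    have hNp0 : N ^ (p - 1) ≠ 0 := rpow_ne_zero hNpos.ne' hp1
    have hb : A * N ^ (p - 1) ≤ ApConst p w := hAple c r hr
    have hrh : S ^ (1 / s) / A ≤ RHConst s w := hRHle c r hr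
    have hAfin : A ≠ ∞ := by
      intro h
      rw [h, ENNReal.top_mul hNp0] at hb
      exact hA.ne (top_le_iff.mp hb)
    have hS : S ^ (1 / s) ≤ RHConst s w * A :=
      (ENNReal.div_le_iff_le_mul (Or.inl hApos.ne') (Or.inl hAfin)).mp hrh
    have e1 : (S ^ (1 / s)) ^ s = S := by
      rw [← ENNReal.rpow_mul, one_div, inv_mul_cancel₀ hs', ENNReal.rpow_one]
    have e2 : (N ^ (p - 1)) ^ s = N ^ (s * (p - 1)) := by
      rw [← ENNReal.rpow_mul, mul_comm]
    calc S * N ^ (s * (p - 1)) = (S ^ (1 / s)) ^ s * (N ^ (p - 1)) ^ s := by rw [e1, e2]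
      _ = (S ^ (1 / s) * N ^ (p - 1)) ^ s := (ENNReal.mul_rpow_of_nonneg _ _ hs0.le).symm
      _ ≤ (RHConst s w * A * N ^ (p - 1)) ^ s :=
        ENNReal.rpow_le_rpow (mul_le_mul_left hS _) hs0.le
      _ = (RHConst s w * (A * N ^ (p - 1))) ^ s := by rw [mul_assoc]
      _ ≤ (RHConst s w * ApConst p w) ^ s :=
        ENNReal.rpow_le_rpow (mul_le_mul_right hb _) hs0.le
  · intro hK
    have hKle : ∀ (c : Rn n) (r : ℝ), 0 < r →
        ((volume (ball c r))⁻¹ * ∫⁻ y in ball c r, (w y) ^ s) *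
          (((volume (ball c r))⁻¹ * ∫⁻ y in ball c r, (w y) ^ (1 - p / (p - 1))) ^
            (s * (p - 1))) ≤ ApConst (s * (p - 1) + 1) (fun x => (w x) ^ s) := by
      intro c r hr
      rw [hAeq]
      exact le_sup3 c hr
    have e3 : ∀ N : ℝ≥0∞, (N ^ (s * (p - 1))) ^ (1 / s) = N ^ (p - 1) := by
      intro N
      rw [← ENNReal.rpow_mul]
      congr 1
      field_simp
    constructor
    · rw [ApConst]
      refine lt_of_le_of_lt (iSup_le fun c => iSup_le fun r => iSup_le fun hr => ?_)
        (ENNReal.rpow_lt_top_of_nonneg (y := 1 / s) (by positivity) hK.ne)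
      set A := (volume (ball c r))⁻¹ * ∫⁻ y in ball c r, w y with hAdef
      set N := (volume (ball c r))⁻¹ * ∫⁻ y in ball c r, (w y) ^ (1 - p / (p - 1)) with hNdef
      set S := (volume (ball c r))⁻¹ * ∫⁻ y in ball c r, (w y) ^ s with hSdef
      have hb : S * N ^ (s * (p - 1)) ≤ ApConst (s * (p - 1) + 1) (fun x => (w x) ^ s) :=
        hKle c r hr
      have hj : A ^ s ≤ S := jensen w hwm hs c hr
      have hAle : A ≤ S ^ (1 / s) := by
        rw [one_div]
        calc A = (A ^ s) ^ s⁻¹ := (round_trip hs').symm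
          _ ≤ S ^ s⁻¹ := ENNReal.rpow_le_rpow hj (by positivity)
      calc A * N ^ (p - 1) ≤ S ^ (1 / s) * N ^ (p - 1) := mul_le_mul_left hAle _
        _ = (S * N ^ (s * (p - 1))) ^ (1 / s) := by
            rw [ENNReal.mul_rpow_of_nonneg S (N ^ (s * (p - 1)))
              (by positivity : (0:ℝ) ≤ 1 / s), e3]
        _ ≤ (ApConst (s * (p - 1) + 1) (fun x => (w x) ^ s)) ^ (1 / s) :=
            ENNReal.rpow_le_rpow hb (by positivity)
    · rw [RHConst]
      refine lt_of_le_of_lt (iSup_le fun c => iSup_le fun r => iSup_le fun hr => ?_)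
        (ENNReal.rpow_lt_top_of_nonneg (y := 1 / s) (by positivity) hK.ne)
      set A := (volume (ball c r))⁻¹ * ∫⁻ y in ball c r, w y with hAdef
      set N := (volume (ball c r))⁻¹ * ∫⁻ y in ball c r, (w y) ^ (1 - p / (p - 1)) with hNdef
      set S := (volume (ball c r))⁻¹ * ∫⁻ y in ball c r, (w y) ^ s with hSdef
      have hb : S * N ^ (s * (p - 1)) ≤ ApConst (s * (p - 1) + 1) (fun x => (w x) ^ s) :=
        hKle c r hr
      have hSpos : 0 < S := avg_pos (hwm.pow_const _) hwsne c hr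
      have hNpos : 0 < N := avg_pos (hwm.pow_const _) hwene c hr
      have hNsp0 : N ^ (s * (p - 1)) ≠ 0 := rpow_ne_zero hNpos.ne' hsp1
      have hNspfin : N ^ (s * (p - 1)) ≠ ∞ := by
        intro h
        rw [h, ENNReal.mul_top hSpos.ne'] at hb
        exact hK.ne (top_le_iff.mp hb)
      have hNfin : N ≠ ∞ := by
        intro h
        exact hNspfin (by rw [h]; exact ENNReal.top_rpow_of_pos hsp1)
      have hNp0 : N ^ (p - 1) ≠ 0 := rpow_ne_zero hNpos.ne' hp1
      have hNpfin : N ^ (p - 1) ≠ ∞ := (ENNReal.rpow_lt_top_of_nonneg hp1.le hNfin).ne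
      have hS2 : S ≤ ApConst (s * (p - 1) + 1) (fun x => (w x) ^ s) * (N ^ (s * (p - 1)))⁻¹ := by
        have h2 := mul_le_mul_left hb ((N ^ (s * (p - 1)))⁻¹)
        rwa [mul_assoc, ENNReal.mul_inv_cancel hNsp0 hNspfin, mul_one] at h2
      have hNA : (N ^ (p - 1))⁻¹ ≤ A := by
        have h1 := holder_one w hwm hw hp c hr
        have h2 := mul_le_mul_left h1 ((N ^ (p - 1))⁻¹)
        rwa [one_mul, mul_assoc, ENNReal.mul_inv_cancel hNp0 hNpfin, mul_one] at h2
      refine ENNReal.div_le_of_le_mul ?_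
      calc S ^ (1 / s) ≤
          (ApConst (s * (p - 1) + 1) (fun x => (w x) ^ s) * (N ^ (s * (p - 1)))⁻¹) ^ (1 / s) :=
            ENNReal.rpow_le_rpow hS2 (by positivity)
        _ = (ApConst (s * (p - 1) + 1) (fun x => (w x) ^ s)) ^ (1 / s) * (N ^ (p - 1))⁻¹ := by
            rw [ENNReal.mul_rpow_of_nonneg (ApConst (s * (p - 1) + 1) (fun x => (w x) ^ s))
              ((N ^ (s * (p - 1)))⁻¹) (by positivity : (0:ℝ) ≤ 1 / s),
              ENNReal.inv_rpow, e3]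
        _ ≤ (ApConst (s * (p - 1) + 1) (fun x => (w x) ^ s)) ^ (1 / s) * A :=
            mul_le_mul_right hNA _

end
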